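/- Let q ≥ 1 and let f: ℝⁿ → ℝ be q-times continuously differentiable with ‖D^q f(x) − D^q f(y)‖ ≤ (q−1)! L_h ‖x−y‖ for all x, y. Let x, s ∈ ℝⁿ with s ≠ 0 and let λ > 0 satisfy T_q(x,0) − T_q(x,s) ≥ (λ/(q+1)) ‖s‖^{q+1}. Then | 1 − ( f(x) − f(x+s) ) / ( T_q(x,0) − T_q(x,s) ) | ≤ (q+1) L_h / (q λ). -/

import Mathlib

open scoped BigOperators

open Set

variable {E F : Type*} [NormedAddCommGroup E] [NormedSpace ℝ E]
  [NormedAddCommGroup F] [NormedSpace ℝ F]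

lemma fderiv_shift (G : E → F) (x y : E) :
    fderiv ℝ (fun z => G (x + z)) y = fderiv ℝ G (x + y) := by
  by_cases hG : DifferentiableAt ℝ G (x + y)
  · have h1 : HasFDerivAt (fun z => G (x + z)) (fderiv ℝ G (x + y)) y := by
    -- composition with translation
      have ht : HasFDerivAt (fun z : E => x + z) (ContinuousLinearMap.id ℝ E) y :=
        (hasFDerivAt_id y).const_add x
      simpa [Function.comp_def] using hG.hasFDerivAt.comp y ht
    exact h1.fderiv
  · have h2 : ¬ DifferentiableAt ℝ (fun z => G (x + z)) y := by
      intro hd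
      apply hG
      have hsub : DifferentiableAt ℝ (fun z : E => z - x) (x + y) :=
        (differentiable_id.sub_const x).differentiableAt
      have := DifferentiableAt.comp (x + y)
        (by simpa [add_sub_cancel_left] using hd) hsub
      have heq : ((fun z => G (x + z)) ∘ fun z : E => z - x) = G := by
        funext z; simp
      rwa [heq] at this
    rw [fderiv_zero_of_not_differentiableAt hG, fderiv_zero_of_not_differentiableAt h2]

lemma itfd_shift (f : E → F) (x : E) (i : ℕ) :
    iteratedFDeriv ℝ i (fun y => f (x + y)) = fun y => iteratedFDeriv ℝ i f (x + y) := by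
  induction i with
  | zero => ext y m; simp [iteratedFDeriv_zero_apply]
  | succ i IH =>
    ext y m
    rw [iteratedFDeriv_succ_apply_left, iteratedFDeriv_succ_apply_left, IH]
    rw [show (fderiv ℝ (fun y => iteratedFDeriv ℝ i f (x + y)) y)
        = fderiv ℝ (iteratedFDeriv ℝ i f) (x + y) from fderiv_shift _ x y]

lemma iteratedDerivWithin_eq_iteratedDeriv_of_contDiff {h : ℝ → ℝ} {q k : ℕ}
    (hh : ContDiff ℝ q h) (hk : k ≤ q) {s : Set ℝ} (hs : UniqueDiffOn ℝ s)
    {y : ℝ} (hy : y ∈ s) :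
    iteratedDerivWithin k h s y = iteratedDeriv k h y := by
  rw [iteratedDerivWithin_eq_iteratedFDerivWithin, iteratedDeriv_eq_iteratedFDeriv]
  congr 1
  have H := (contDiff_iff_ftaylorSeries.mp hh).hasFTaylorSeriesUpToOn s
  exact (H.eq_iteratedFDerivWithin_of_uniqueDiffOn (by exact_mod_cast hk) hs hy).symm

lemma iteratedDeriv_pow_my (c : ℝ) (k : ℕ) : ∀ j : ℕ, iteratedDeriv j (fun t : ℝ => c * t ^ k)
    = fun t => c * (k.descFactorial j : ℝ) * t ^ (k - j) := by
  intro j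
  induction j with
  | zero => simp
  | succ j ih =>
    rw [iteratedDeriv_succ, ih]
    funext t
    rw [deriv_const_mul _ (differentiableAt_pow _), deriv_pow_field]
    rw [Nat.descFactorial_succ, Nat.cast_mul, Nat.sub_sub]
    ring

lemma iteratedDeriv_sub_my {k : ℕ} {u v : ℝ → ℝ} (hu : ContDiff ℝ k u) (hv : ContDiff ℝ k v) :
    iteratedDeriv k (fun t => u t - v t) = fun t => iteratedDeriv k u t - iteratedDeriv k v t := by
  funext t
  rw [← iteratedDerivWithin_univ, ← iteratedDerivWithin_univ, ← iteratedDerivWithin_univ]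
  exact iteratedDerivWithin_sub (Set.mem_univ t) uniqueDiffOn_univ hu.contDiffWithinAt hv.contDiffWithinAt

lemma itderiv_line {n : ℕ} {q : ℕ} {f : EuclideanSpace ℝ (Fin n) → ℝ} (hf : ContDiff ℝ q f)
    (x s : EuclideanSpace ℝ (Fin n)) {i : ℕ} (hi : i ≤ q) (t : ℝ) :
    iteratedDeriv i ((fun y => f (x + y)) ∘ (ContinuousLinearMap.toSpanSingleton ℝ s)) t
      = iteratedFDeriv ℝ i f (x + t • s) (fun _ => s) := by
  have hF : ContDiff ℝ q (fun y => f (x + y)) := hf.comp (contDiff_const.add contDiff_id)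
  rw [iteratedDeriv_eq_iteratedFDeriv,
    ContinuousLinearMap.iteratedFDeriv_comp_right _ hF t (by exact_mod_cast hi)]
  simp [ContinuousMultilinearMap.compContinuousLinearMap_apply, itfd_shift,
    ContinuousLinearMap.toSpanSingleton_apply]

lemma remainder_bound {n m : ℕ} {K : ℝ} (hK : 0 ≤ K) {f : EuclideanSpace ℝ (Fin n) → ℝ}
    (hf : ContDiff ℝ (m + 1) f)
    (hLip : ∀ u v, ‖iteratedFDeriv ℝ (m + 1) f u - iteratedFDeriv ℝ (m + 1) f v‖ ≤ K * ‖u - v‖)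
    (x s : EuclideanSpace ℝ (Fin n)) :
    |f (x + s) - ∑ i ∈ Finset.range (m + 2), (1 / (Nat.factorial i) : ℝ) *
        iteratedFDeriv ℝ i f x (fun _ => s)| ≤ K * ‖s‖ ^ (m + 2) / (Nat.factorial (m + 1)) := by
  set a : ℕ → ℝ := fun i => iteratedFDeriv ℝ i f x (fun _ => s) with ha
  set c : ℝ := a (m + 1) / (Nat.factorial (m + 1)) with hc
  set g : ℝ → ℝ :=
    (fun y => f (x + y)) ∘ (ContinuousLinearMap.toSpanSingleton ℝ s) with hgdef
  have hg : ContDiff ℝ (m + 1) g :=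
    (hf.comp (contDiff_const.add contDiff_id)).comp
      (ContinuousLinearMap.toSpanSingleton ℝ s).contDiff
  have hp : ContDiff ℝ (m + 1) (fun t : ℝ => c * t ^ (m + 1)) :=
    (contDiff_id.pow (m + 1)).const_smul c |>.of_le le_top |>.of_le le_top
  set h : ℝ → ℝ := fun t => g t - c * t ^ (m + 1) with hhdef
  have hh : ContDiff ℝ (m + 1) h := hg.sub hp
  have hudiff : UniqueDiffOn ℝ (Set.Icc (0:ℝ) 1) := uniqueDiffOn_Icc one_pos
  -- derivative formulas
  have hgat : ∀ i ≤ m + 1, ∀ t : ℝ,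
      iteratedDeriv i g t = iteratedFDeriv ℝ i f (x + t • s) (fun _ => s) :=
    fun i hi t => itderiv_line hf x s hi t
  have hpat : ∀ i : ℕ, iteratedDeriv i (fun t : ℝ => c * t ^ (m + 1))
      = fun t => c * ((m + 1).descFactorial i : ℝ) * t ^ (m + 1 - i) := by
    intro i
    exact iteratedDeriv_pow_my c (m + 1) i
  have hhat : ∀ i ≤ m + 1, ∀ t : ℝ,
      iteratedDeriv i h t = iteratedDeriv i g t
        - c * ((m + 1).descFactorial i : ℝ) * t ^ (m + 1 - i) := by
    intro i hi t
    have hcast : (i : WithTop ℕ∞) ≤ ((m + 1 : ℕ) : WithTop ℕ∞) := by exact_mod_cast hi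
    have := iteratedDeriv_sub_my (hg.of_le hcast) (hp.of_le hcast)
    rw [hhdef, this, hpat i]
  -- value of lower derivatives at 0
  have hval0 : ∀ i ≤ m, iteratedDeriv i h 0 = a i := by
    intro i hi
    rw [hhat i (hi.trans (Nat.le_succ m)), hgat i (hi.trans (Nat.le_succ m))]
    have h1 : m + 1 - i ≠ 0 := by omega
    simp [zero_pow h1, ha]
  -- value of h at 1
  have hval1 : h 1 = f (x + s) - c := by
    simp [hhdef, hgdef, ContinuousLinearMap.toSpanSingleton_apply]
  -- bound on the (m+1)-st derivative on Icc 0 1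
  have hbound : ∀ y ∈ Set.Icc (0:ℝ) 1, |iteratedDeriv (m + 1) h y| ≤ K * ‖s‖ ^ (m + 2) := by
    intro y hy
    have hcfact : c * ((m + 1).descFactorial (m + 1) : ℝ) = a (m + 1) := by
      rw [Nat.descFactorial_self, hc]
      field_simp
    have := hhat (m + 1) le_rfl y
    rw [this, hgat (m + 1) le_rfl y]
    simp only [Nat.sub_self, pow_zero, mul_one, hcfact]
    have heq : iteratedFDeriv ℝ (m + 1) f (x + y • s) (fun _ => s) - a (m + 1)
        = (iteratedFDeriv ℝ (m + 1) f (x + y • s) - iteratedFDeriv ℝ (m + 1) f x)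
            (fun _ => s) := by
      rw [ContinuousMultilinearMap.sub_apply, ha]
    rw [heq, ← Real.norm_eq_abs]
    calc ‖(iteratedFDeriv ℝ (m + 1) f (x + y • s) - iteratedFDeriv ℝ (m + 1) f x)
          (fun _ => s)‖
        ≤ ‖iteratedFDeriv ℝ (m + 1) f (x + y • s) - iteratedFDeriv ℝ (m + 1) f x‖
            * ∏ _i : Fin (m + 1), ‖s‖ := by
          exact ContinuousMultilinearMap.le_opNorm _ _
      _ ≤ (K * ‖s‖) * ‖s‖ ^ (m + 1) := by
          rw [Finset.prod_const, Finset.card_univ, Fintype.card_fin]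
          gcongr
          have := hLip (x + y • s) x
          have hnorm : ‖x + y • s - x‖ = |y| * ‖s‖ := by
            rw [add_sub_cancel_left, norm_smul, Real.norm_eq_abs]
          rw [hnorm] at this
          refine this.trans ?_
          have hy1 : |y| ≤ 1 := by
            rw [abs_le]; constructor <;> [linarith [hy.1]; linarith [hy.2]]
          nlinarith [mul_nonneg hK (norm_nonneg s), abs_nonneg y, norm_nonneg s]
      _ = K * ‖s‖ ^ (m + 2) := by ring
  -- Taylor's theorem with Lagrange remainder on [0,1]
  have hEq : ∀ y ∈ Set.Icc (0:ℝ) 1, ∀ k ≤ m + 1,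
      iteratedDerivWithin k h (Set.Icc 0 1) y = iteratedDeriv k h y :=
    fun y hy k hk => iteratedDerivWithin_eq_iteratedDeriv_of_contDiff hh hk hudiff hy
  have hdiff : Differentiable ℝ (iteratedDeriv m h) :=
    hh.differentiable_iteratedDeriv m (by exact_mod_cast Nat.lt_succ_self m)
  have hcont : ContDiffOn ℝ m h (Set.Icc 0 1) :=
    (hh.of_le (by exact_mod_cast Nat.le_succ m)).contDiffOn
  have hf' : DifferentiableOn ℝ (iteratedDerivWithin m h (Set.Icc 0 1)) (Set.Ioo 0 1) :=
    fun y hy => ((hdiff y).differentiableWithinAt).congr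
      (fun z hz => hEq z (Set.Ioo_subset_Icc_self hz) m (Nat.le_succ m))
      (hEq y (Set.Ioo_subset_Icc_self hy) m (Nat.le_succ m))
  obtain ⟨ξ, hξ, hlag⟩ := taylor_mean_remainder_lagrange (f := h) (x₀ := 0) (x := 1)
    one_pos.ne (by rw [Set.uIcc_of_le zero_le_one]; exact hcont)
    (by rw [Set.uIcc_of_le zero_le_one, Set.uIoo_of_le zero_le_one]; exact hf')
  rw [Set.uIcc_of_le zero_le_one] at hlag
  rw [Set.uIoo_of_le zero_le_one] at hξ
  -- rewrite the Taylor polynomial of h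
  have htaylor : taylorWithinEval h m (Set.Icc 0 1) 0 1
      = ∑ k ∈ Finset.range (m + 1), (1 / (Nat.factorial k) : ℝ) * a k := by
    rw [taylor_within_apply]
    refine Finset.sum_congr rfl fun k hk => ?_
    rw [Finset.mem_range] at hk
    rw [hEq 0 (Set.left_mem_Icc.mpr zero_le_one) k (by omega),
      hval0 k (by omega)]
    simp [smul_eq_mul, one_div]
  have hremainder : h 1 - taylorWithinEval h m (Set.Icc 0 1) 0 1
      = f (x + s) - ∑ i ∈ Finset.range (m + 2), (1 / (Nat.factorial i) : ℝ) * a i := by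
    have hsum : ∑ i ∈ Finset.range (m + 2), (1 / (Nat.factorial i) : ℝ) * a i
        = (∑ i ∈ Finset.range (m + 1), (1 / (Nat.factorial i) : ℝ) * a i)
          + (1 / ((m + 1).factorial : ℝ)) * a (m + 1) :=
      Finset.sum_range_succ _ (m + 1)
    rw [hval1, htaylor, hsum, hc]
    ring
  have goalEq : (f (x + s) - ∑ i ∈ Finset.range (m + 2), (1 / (Nat.factorial i) : ℝ) *
      iteratedFDeriv ℝ i f x (fun _ => s))
      = iteratedDerivWithin (m + 1) h (Set.Icc 0 1) ξ * (1 - 0) ^ (m + 1)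
          / ((m + 1).factorial : ℝ) := by
    rw [← hlag]; exact hremainder.symm
  rw [goalEq, hEq ξ (Set.Ioo_subset_Icc_self hξ) (m + 1) le_rfl]
  rw [show ((1:ℝ) - 0) ^ (m + 1) = 1 by norm_num, mul_one, abs_div,
    abs_of_nonneg (show (0:ℝ) ≤ ((m + 1).factorial : ℝ) by positivity)]
  gcongr
  exact hbound ξ (Set.Ioo_subset_Icc_self hξ)

/-- The `q`-th order Taylor polynomial of `f` at `x`:
`T_q(x,s) = ∑_{i=0}^{q} (1/i!) Dⁱf(x)[s,…,s]`. -/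
noncomputable def taylorPoly {n : ℕ} (q : ℕ) (f : EuclideanSpace ℝ (Fin n) → ℝ)
    (x s : EuclideanSpace ℝ (Fin n)) : ℝ :=
  ∑ i ∈ Finset.range (q + 1),
    (1 / (Nat.factorial i) : ℝ) * iteratedFDeriv ℝ i f x (fun _ => s)

theorem taylor_model_ratio_bound {n : ℕ} (q : ℕ) (hq : 1 ≤ q) (Lh : ℝ)
    (f : EuclideanSpace ℝ (Fin n) → ℝ) (hf : ContDiff ℝ q f)
    (hLip : ∀ x y : EuclideanSpace ℝ (Fin n),
      ‖iteratedFDeriv ℝ q f x - iteratedFDeriv ℝ q f y‖ ≤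
        (Nat.factorial (q - 1) : ℝ) * Lh * ‖x - y‖)
    (x s : EuclideanSpace ℝ (Fin n)) (hs : s ≠ 0) (lam : ℝ) (hlam : 0 < lam)
    (hdec : taylorPoly q f x 0 - taylorPoly q f x s ≥ lam / (q + 1) * ‖s‖ ^ (q + 1)) :
    |1 - (f x - f (x + s)) / (taylorPoly q f x 0 - taylorPoly q f x s)| ≤
      (q + 1) * Lh / (q * lam) := by
  obtain ⟨m, rfl⟩ : ∃ m, q = m + 1 := ⟨q - 1, (Nat.succ_pred_eq_of_pos hq).symm⟩
  have hsnorm : (0:ℝ) < ‖s‖ := norm_pos_iff.mpr hs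
  have hLip' : ∀ u v : EuclideanSpace ℝ (Fin n),
      ‖iteratedFDeriv ℝ (m + 1) f u - iteratedFDeriv ℝ (m + 1) f v‖ ≤
        ((m.factorial : ℝ) * Lh) * ‖u - v‖ := by
    intro u v
    simpa using hLip u v
  have hLh : 0 ≤ Lh := by
    have h0 := hLip' (x + s) x
    rw [add_sub_cancel_left] at h0
    have h1 : (0:ℝ) ≤ ((m.factorial : ℝ) * Lh) * ‖s‖ :=
      le_trans (norm_nonneg _) h0
    have hfact : (0:ℝ) < (m.factorial : ℝ) := by positivity
    nlinarith [mul_pos hfact hsnorm]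
  have hK : 0 ≤ (m.factorial : ℝ) * Lh := mul_nonneg (by positivity) hLh
  have hrem := remainder_bound hK hf hLip' x s
  have hR : |f (x + s) - taylorPoly (m + 1) f x s| ≤
      ((m.factorial : ℝ) * Lh) * ‖s‖ ^ (m + 2) / ((m + 1).factorial : ℝ) := hrem
  have hRbound : |f (x + s) - taylorPoly (m + 1) f x s| ≤
      Lh * ‖s‖ ^ (m + 2) / ((m : ℝ) + 1) := by
    refine hR.trans_eq ?_
    rw [Nat.factorial_succ]
    have hfne : ((m.factorial : ℝ)) ≠ 0 := by positivity
    have hm1 : ((m : ℝ) + 1) ≠ 0 := by positivity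
    push_cast
    field_simp
  have hT0 : taylorPoly (m + 1) f x 0 = f x := by
    rw [taylorPoly, Finset.sum_eq_single 0]
    · simp
    · intro i _ hne
      have hz : iteratedFDeriv ℝ i f x (fun _ => (0 : EuclideanSpace ℝ (Fin n))) = 0 :=
        ContinuousMultilinearMap.map_coord_zero _ (⟨0, Nat.pos_of_ne_zero hne⟩ : Fin i) rfl
      rw [hz, mul_zero]
    · intro h0
      exact absurd (Finset.mem_range.mpr (by omega)) h0
  have hΔpos : 0 < taylorPoly (m + 1) f x 0 - taylorPoly (m + 1) f x s := by
    refine lt_of_lt_of_le ?_ hdec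
    positivity
  have hΔne : taylorPoly (m + 1) f x 0 - taylorPoly (m + 1) f x s ≠ 0 := ne_of_gt hΔpos
  have hkey : 1 - (f x - f (x + s)) / (taylorPoly (m + 1) f x 0 - taylorPoly (m + 1) f x s)
      = (f (x + s) - taylorPoly (m + 1) f x s)
        / (taylorPoly (m + 1) f x 0 - taylorPoly (m + 1) f x s) := by
    rw [eq_div_iff hΔne, sub_mul, div_mul_cancel₀ _ hΔne, hT0]
    ring
  rw [hkey, abs_div, abs_of_pos hΔpos]
  calc |f (x + s) - taylorPoly (m + 1) f x s|
        / (taylorPoly (m + 1) f x 0 - taylorPoly (m + 1) f x s)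
      ≤ (Lh * ‖s‖ ^ (m + 2) / ((m : ℝ) + 1))
          / (lam / ((m + 1 : ℕ) + 1) * ‖s‖ ^ ((m + 1) + 1)) := by
        exact div_le_div₀ (by positivity) hRbound (by positivity) hdec
    _ = ((m + 1 : ℕ) + 1) * Lh / ((m + 1 : ℕ) * lam) := by
        push_cast
        rw [show ((m : ℝ) + 1 + 1) = (m : ℝ) + 2 by ring]
        rw [show (m + 1) + 1 = m + 2 from rfl]
        field_simp
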